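/- Let X be positive with moment generating function M_X finite on (0, a), α ≥ 1/2, λ > 0, r > 0. Define X_r = G + (√(rX) + N/√(2λ))², where G ~ Gamma(α - 1/2, λ) and N is standard Gaussian, with G, N, X mutually independent. Then E[exp(t X_r)] = (1 - t/λ)^{-α} · M_X(rt / (1 - t/λ)) for 0 < t < λ/(λr/a + 1). -/

import Mathlib

open MeasureTheory ProbabilityTheory Real
open scoped NNReal ENNReal

lemma complete_sq_aux {lam t c n w : ℝ} (hlam : 0 < lam) (hw0 : w ≠ 0) (hd : 0 < 1 - t/lam)
    (hw2 : w^2 = 2*lam) :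
    -(n - 0)^2/(2*(1:ℝ)) + t*(c+n/w)^2
      = t*c^2/(1-t/lam) + -(n - t*w*c/(lam*(1-t/lam)))^2/(2*(1-t/lam)⁻¹) := by
  have h1 : lam ≠ 0 := hlam.ne'
  have h3 : 1 - t/lam = (lam - t)/lam := by field_simp
  have h4 : lam - t ≠ 0 := by
    have h5 := hd; rw [h3] at h5
    intro h; rw [h] at h5; simp at h5
  rw [h3]
  field_simp
  obtain rfl : lam = w^2/2 := by linarith
  ring

lemma gamma_mgf_aux {β lam t : ℝ} (hβ : 0 < β) (hlam : 0 < lam) (ht : t < lam) :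
    ∫⁻ x, ENNReal.ofReal (rexp (t * x)) ∂(gammaMeasure β lam)
      = ENNReal.ofReal ((lam / (lam - t)) ^ β) := by
  have hlt : 0 < lam - t := by linarith
  have hmg : ∀ c, Measurable (gammaPDF β c) := fun c => (measurable_gammaPDFReal β c).ennreal_ofReal
  rw [gammaMeasure, lintegral_withDensity_eq_lintegral_mul _
    (hmg lam) (measurable_id'.const_mul t).exp.ennreal_ofReal]
  have hpt : (fun x => (gammaPDF β lam x * ENNReal.ofReal (rexp (t * x))))
      = fun x => ENNReal.ofReal ((lam / (lam - t)) ^ β) * gammaPDF β (lam - t) x := by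
    ext x
    by_cases hx : 0 ≤ x
    · rw [gammaPDF_of_nonneg hx, gammaPDF_of_nonneg hx,
        ← ENNReal.ofReal_mul (by positivity), ← ENNReal.ofReal_mul (by positivity)]
      congr 1
      have he : rexp (-((lam - t) * x)) = rexp (-(lam * x)) * rexp (t * x) := by
        rw [← Real.exp_add]; congr 1; ring
      have hΓ : Real.Gamma β ≠ 0 := (Real.Gamma_pos_of_pos hβ).ne'
      have h1 : ((lam - t) : ℝ) ^ β ≠ 0 := (Real.rpow_pos_of_pos hlt β).ne'
      rw [Real.div_rpow hlam.le hlt.le, he]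
      field_simp
    · rw [gammaPDF_of_neg (not_le.mp hx), gammaPDF_of_neg (not_le.mp hx)]
      simp
  simp only [Pi.mul_apply]
  rw [show (fun a => gammaPDF β lam a * ENNReal.ofReal (rexp (t * a))) = _ from hpt,
    lintegral_const_mul _ (hmg (lam - t)), lintegral_gammaPDF_eq_one hβ hlt, mul_one]

lemma gauss_sq_aux {lam t : ℝ} (hlam : 0 < lam) (ht : t < lam) (c : ℝ) :
    ∫⁻ n, ENNReal.ofReal (rexp (t * (c + n / Real.sqrt (2 * lam)) ^ 2)) ∂(gaussianReal 0 1)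
      = ENNReal.ofReal ((1 - t / lam) ^ (-(1/2 : ℝ)) * rexp (t * c ^ 2 / (1 - t / lam))) := by
  have hd : 0 < 1 - t / lam := by
    have : t / lam < 1 := (div_lt_one hlam).mpr ht
    linarith
  set d : ℝ := 1 - t / lam with hd_def
  set V : ℝ≥0 := Real.toNNReal d⁻¹ with hV_def
  have hVc : (V : ℝ) = d⁻¹ := Real.coe_toNNReal _ (by positivity)
  have hVne : V ≠ 0 := by
    simp only [hV_def, ne_eq, Real.toNNReal_eq_zero, not_le]
    positivity
  set m : ℝ := t * Real.sqrt (2 * lam) * c / (lam * d) with hm_def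
  have hw2 : Real.sqrt (2 * lam) ^ 2 = 2 * lam := Real.sq_sqrt (by positivity)
  have hw0 : Real.sqrt (2 * lam) ≠ 0 := by positivity
  have hmeas : Measurable fun n : ℝ => ENNReal.ofReal
      (rexp (t * (c + n / Real.sqrt (2 * lam)) ^ 2)) := by
    fun_prop
  rw [gaussianReal_of_var_ne_zero 0 one_ne_zero,
    lintegral_withDensity_eq_lintegral_mul _ (measurable_gaussianPDF 0 1) hmeas]
  have hK : (0:ℝ) ≤ Real.sqrt d⁻¹ * rexp (t * c ^ 2 / d) := by positivity
  have hpt : (fun n => (gaussianPDF 0 1 n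
        * ENNReal.ofReal (rexp (t * (c + n / Real.sqrt (2 * lam)) ^ 2))))
      = fun n => ENNReal.ofReal (Real.sqrt d⁻¹ * rexp (t * c ^ 2 / d)) * gaussianPDF m V n := by
    ext n
    rw [gaussianPDF, gaussianPDF, ← ENNReal.ofReal_mul (gaussianPDFReal_nonneg 0 1 n),
      ← ENNReal.ofReal_mul hK]
    congr 1
    rw [gaussianPDFReal, gaussianPDFReal, hVc]
    have hsplit : Real.sqrt (2 * π * d⁻¹) = Real.sqrt (2 * π) * Real.sqrt d⁻¹ := by
      rw [← Real.sqrt_mul (by positivity)]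
    have hexp : -(n - 0) ^ 2 / (2 * ((1:ℝ≥0):ℝ)) + t * (c + n / Real.sqrt (2 * lam)) ^ 2
        = t * c ^ 2 / d + -(n - m) ^ 2 / (2 * d⁻¹) := by
      rw [hm_def, hd_def]
      push_cast
      exact complete_sq_aux hlam hw0 hd hw2
    calc (Real.sqrt (2 * π * ((1:ℝ≥0):ℝ)))⁻¹ * rexp (-(n - 0) ^ 2 / (2 * ((1:ℝ≥0):ℝ)))
          * rexp (t * (c + n / Real.sqrt (2 * lam)) ^ 2)
        = (Real.sqrt (2 * π))⁻¹
          * rexp (-(n - 0) ^ 2 / (2 * ((1:ℝ≥0):ℝ)) + t * (c + n / Real.sqrt (2 * lam)) ^ 2) := by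
          rw [Real.exp_add]; push_cast; ring_nf
      _ = (Real.sqrt (2 * π))⁻¹ * (rexp (t * c ^ 2 / d) * rexp (-(n - m) ^ 2 / (2 * d⁻¹))) := by
          rw [hexp, Real.exp_add]
      _ = Real.sqrt d⁻¹ * rexp (t * c ^ 2 / d)
          * ((Real.sqrt (2 * π * d⁻¹))⁻¹ * rexp (-(n - m) ^ 2 / (2 * d⁻¹))) := by
          rw [hsplit, mul_inv]
          have h5 : Real.sqrt d⁻¹ ≠ 0 := by positivity
          field_simp
  simp only [Pi.mul_apply]
  rw [show (fun n => gaussianPDF 0 1 n * ENNReal.ofReal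
      (rexp (t * (c + n / Real.sqrt (2 * lam)) ^ 2))) = _ from hpt,
    lintegral_const_mul _ (measurable_gaussianPDF m V), lintegral_gaussianPDF_eq_one m hVne,
    mul_one]
  congr 1
  rw [Real.sqrt_inv, Real.sqrt_eq_rpow, ← Real.rpow_neg hd.le]

/-- **MGF of the quadratic gamma channel.** Let `X` be positive with MGF finite on `(0, a)`,
`α ≥ 1/2`, `λ > 0`, `r > 0`, and `X_r = G + (√(rX) + N/√(2λ))²` with `G ~ Gamma(α-1/2, λ)`,
`N` standard Gaussian, `X, G, N` mutually independent. Then for `0 < t < λ/(λr/a + 1)`,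
`E[exp(t X_r)] = (1 - t/λ)^{-α} · M_X(rt/(1 - t/λ))`. -/
theorem mgf_quadratic_gamma_channel
    {Ω : Type*} [MeasureSpace Ω] [IsProbabilityMeasure (ℙ : Measure Ω)]
    (α lam r a : ℝ) (hα : 1 / 2 ≤ α) (hlam : 0 < lam) (hr : 0 < r) (ha : 0 < a)
    (X G N : Ω → ℝ) (hXmeas : Measurable X) (hGmeas : Measurable G)
    (hNmeas : Measurable N)
    (hindep : iIndepFun ![X, G, N] ℙ)
    (hXpos : ∀ᵐ ω ∂ℙ, 0 < X ω)
    (hG : Measure.map G ℙ = gammaMeasure (α - 1 / 2) lam)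
    (hN : Measure.map N ℙ = gaussianReal 0 1)
    (hmgf : ∀ t ∈ Set.Ioo (0 : ℝ) a, Integrable (fun ω => Real.exp (t * X ω)) ℙ)
    (Xr : Ω → ℝ)
    (hXr : Xr = fun ω => G ω + (Real.sqrt (r * X ω) + N ω / Real.sqrt (2 * lam)) ^ 2) :
    ∀ t : ℝ, 0 < t → t < lam / (lam * r / a + 1) →
      ∫ ω, Real.exp (t * Xr ω) ∂ℙ
        = (1 - t / lam) ^ (-α) * ∫ ω, Real.exp ((r * t / (1 - t / lam)) * X ω) ∂ℙ := by
  intro t ht0 ht2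
  -- basic inequalities
  have hden : 0 < lam * r / a + 1 := by positivity
  have htlam : t < lam := by
    have h1 : lam / (lam * r / a + 1) ≤ lam := by
      apply div_le_self hlam.le
      have : 0 ≤ lam * r / a := by positivity
      linarith
    linarith
  have hd : 0 < 1 - t / lam := by
    have : t / lam < 1 := (div_lt_one hlam).mpr htlam
    linarith
  set u : ℝ := r * t / (1 - t / lam) with hu_def
  have hu0 : 0 < u := by positivity
  have hua : u < a := by
    rw [hu_def, div_lt_iff₀ hd]
    have h2 : t * (lam * r / a + 1) < lam := (lt_div_iff₀ hden).mp ht2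
    have e : a * (lam * r / a) = lam * r := by field_simp
    have h3 : t * (lam * r) + t * a < lam * a := by
      calc t * (lam * r) + t * a = t * (a * (lam * r / a)) + t * a := by rw [e]
        _ = t * (lam * r / a + 1) * a := by ring
        _ < lam * a := by exact mul_lt_mul_of_pos_right h2 ha
    have h5 : a * (1 - t / lam) * lam = a * lam - a * t := by field_simp
    have h6 : r * t * lam < a * (1 - t / lam) * lam := by rw [h5]; nlinarith
    exact lt_of_mul_lt_mul_right h6 hlam.le
  -- case α = 1/2 is contradictory
  rcases eq_or_lt_of_le hα with heq | hαgt
  · exfalso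
    haveI h1 : IsProbabilityMeasure (Measure.map G ℙ) :=
      Measure.isProbabilityMeasure_map hGmeas.aemeasurable
    have h2 := h1.measure_univ
    rw [hG] at h2
    have hz : gammaMeasure (α - 1 / 2) lam = 0 := by
      rw [gammaMeasure]
      have hpdf : gammaPDF (α - 1 / 2) lam = 0 := by
        have h0 : α - 1 / 2 = 0 := by rw [← heq]; ring
        rw [h0]
        ext x
        simp [gammaPDF, gammaPDFReal, Real.Gamma_zero]
      rw [hpdf]
      simp
    rw [hz] at h2
    simp at h2
  have hβ : 0 < α - 1 / 2 := by linarith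
  -- independence structure
  have hfmeas : ∀ i, Measurable (![X, G, N] i) := by
    intro i; fin_cases i <;> simpa
  have hXN : IndepFun (fun ω => (X ω, N ω)) G ℙ :=
    hindep.indepFun_prodMk hfmeas 0 2 1 (by decide) (by decide)
  have hXNindep : IndepFun X N ℙ := hindep.indepFun (show (0 : Fin 3) ≠ 2 by decide)
  have hQG : IndepFun
      (fun ω => rexp (t * (Real.sqrt (r * X ω) + N ω / Real.sqrt (2 * lam)) ^ 2))
      (fun ω => rexp (t * G ω)) ℙ := by
    have hφ : Measurable fun p : ℝ × ℝ =>
        rexp (t * (Real.sqrt (r * p.1) + p.2 / Real.sqrt (2 * lam)) ^ 2) := by fun_prop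
    have hψ : Measurable fun x : ℝ => rexp (t * x) := by fun_prop
    exact hXN.comp hφ hψ
  -- split the integral
  have hsplit : ∫ ω, rexp (t * Xr ω) ∂ℙ
      = (∫ ω, rexp (t * (Real.sqrt (r * X ω) + N ω / Real.sqrt (2 * lam)) ^ 2) ∂ℙ)
        * ∫ ω, rexp (t * G ω) ∂ℙ := by
    have h1 : ∀ ω, rexp (t * Xr ω)
        = rexp (t * (Real.sqrt (r * X ω) + N ω / Real.sqrt (2 * lam)) ^ 2)
          * rexp (t * G ω) := by
      intro ω
      rw [hXr, ← Real.exp_add]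
      congr 1
      ring
    simp only [h1]
    exact hQG.integral_mul_eq_mul_integral (Measurable.aestronglyMeasurable (by fun_prop)) (Measurable.aestronglyMeasurable (by fun_prop))
  -- gamma factor
  have hGint : ∫ ω, rexp (t * G ω) ∂ℙ = (1 - t / lam) ^ (-(α - 1 / 2)) := by
    have h1 : ∫ ω, rexp (t * G ω) ∂ℙ = ∫ x, rexp (t * x) ∂(Measure.map G ℙ) :=
      (integral_map hGmeas.aemeasurable ((show Measurable fun x : ℝ => rexp (t * x) by fun_prop).aestronglyMeasurable)).symm
    rw [h1, hG, integral_eq_lintegral_of_nonneg_ae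
        (ae_of_all _ fun x => (Real.exp_pos _).le) (Measurable.aestronglyMeasurable (by fun_prop)),
      gamma_mgf_aux hβ hlam htlam, ENNReal.toReal_ofReal (Real.rpow_nonneg (le_of_lt (div_pos hlam (by linarith))) _)]
    have e1 : (1 - t / lam)⁻¹ = lam / (lam - t) := by
      rw [show 1 - t / lam = (lam - t) / lam by field_simp]
      rw [inv_div]
    calc (lam / (lam - t)) ^ (α - 1 / 2) = ((1 - t / lam)⁻¹) ^ (α - 1 / 2) := by rw [e1]
      _ = ((1 - t / lam) ^ (α - 1 / 2))⁻¹ := Real.inv_rpow hd.le _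
      _ = (1 - t / lam) ^ (-(α - 1 / 2)) := (Real.rpow_neg hd.le _).symm
  -- gaussian-X factor
  have hQint : ∫ ω, rexp (t * (Real.sqrt (r * X ω) + N ω / Real.sqrt (2 * lam)) ^ 2) ∂ℙ
      = (1 - t / lam) ^ (-(1/2 : ℝ)) * ∫ ω, rexp (u * X ω) ∂ℙ := by
    have hXNmeas : Measurable fun ω => (X ω, N ω) := hXmeas.prodMk hNmeas
    have hmapXN : Measure.map (fun ω => (X ω, N ω)) ℙ
        = (Measure.map X ℙ).prod (Measure.map N ℙ) :=
      (indepFun_iff_map_prod_eq_prod_map_map hXmeas.aemeasurable hNmeas.aemeasurable).mp hXNindep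
    have hF : Measurable fun p : ℝ × ℝ =>
        ENNReal.ofReal (rexp (t * (Real.sqrt (r * p.1) + p.2 / Real.sqrt (2 * lam)) ^ 2)) := by
      fun_prop
    haveI instP : IsProbabilityMeasure (Measure.map X ℙ) :=
      Measure.isProbabilityMeasure_map hXmeas.aemeasurable
    rw [integral_eq_lintegral_of_nonneg_ae (ae_of_all _ fun ω => (Real.exp_pos _).le)
      (Measurable.aestronglyMeasurable (by fun_prop))]
    have l1 : ∫⁻ ω, ENNReal.ofReal
          (rexp (t * (Real.sqrt (r * X ω) + N ω / Real.sqrt (2 * lam)) ^ 2)) ∂ℙ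
        = ∫⁻ p, ENNReal.ofReal
            (rexp (t * (Real.sqrt (r * p.1) + p.2 / Real.sqrt (2 * lam)) ^ 2))
            ∂((Measure.map X ℙ).prod (gaussianReal 0 1)) := by
      rw [← hN, ← hmapXN, lintegral_map hF hXNmeas]
    rw [l1, lintegral_prod _ hF.aemeasurable]
    have haeX : ∀ᵐ x ∂(Measure.map X ℙ), 0 < x := by
      rw [ae_map_iff hXmeas.aemeasurable measurableSet_Ioi]
      exact hXpos
    have hinner : ∀ᵐ x ∂(Measure.map X ℙ),
        (∫⁻ n, ENNReal.ofReal
          (rexp (t * (Real.sqrt (r * x) + n / Real.sqrt (2 * lam)) ^ 2)) ∂(gaussianReal 0 1))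
        = ENNReal.ofReal ((1 - t / lam) ^ (-(1/2 : ℝ))) * ENNReal.ofReal (rexp (u * x)) := by
      filter_upwards [haeX] with x hx
      rw [gauss_sq_aux hlam htlam (Real.sqrt (r * x)),
        Real.sq_sqrt (le_of_lt (mul_pos hr hx)),
        ENNReal.ofReal_mul (by positivity)]
      congr 2
      rw [hu_def]
      ring
    rw [lintegral_congr_ae hinner,
      lintegral_const_mul _ ((measurable_id'.const_mul u).exp.ennreal_ofReal)]
    have l2 : ∫⁻ x, ENNReal.ofReal (rexp (u * x)) ∂(Measure.map X ℙ)
        = ENNReal.ofReal (∫ ω, rexp (u * X ω) ∂ℙ) := by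
      rw [lintegral_map (by fun_prop) hXmeas,
        ← ofReal_integral_eq_lintegral_ofReal (hmgf u ⟨hu0, hua⟩)
          (ae_of_all _ fun ω => (Real.exp_pos _).le)]
    rw [l2, ← ENNReal.ofReal_mul (by positivity),
      ENNReal.toReal_ofReal (mul_nonneg (Real.rpow_nonneg hd.le _)
        (integral_nonneg fun ω => (Real.exp_pos _).le))]
  rw [hsplit, hGint, hQint]
  have hcomb : (1 - t / lam) ^ (-(1/2 : ℝ)) * (1 - t / lam) ^ (-(α - 1 / 2))
      = (1 - t / lam) ^ (-α) := by
    rw [← Real.rpow_add hd]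
    congr 1
    ring
  calc (1 - t / lam) ^ (-(1/2 : ℝ)) * (∫ ω, rexp (u * X ω) ∂ℙ) * (1 - t / lam) ^ (-(α - 1 / 2))
      = ((1 - t / lam) ^ (-(1/2 : ℝ)) * (1 - t / lam) ^ (-(α - 1 / 2)))
        * ∫ ω, rexp (u * X ω) ∂ℙ := by ring
    _ = (1 - t / lam) ^ (-α) * ∫ ω, rexp (u * X ω) ∂ℙ := by rw [hcomb]
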